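/- Let M ≥ 2, 0 < η ≤ 1/2, and set c = (6.16/η)^{1 + 2/M}. Let a_1, …, a_N, b_1, …, b_N ∈ ℝ^d, let Z = (Z_1, …, Z_d) be uniformly distributed over the list (a_1, …, a_N, b_1, …, b_N), and suppose σ_1, …, σ_d > 0 satisfy σ_i^M ≥ E|Z_i − E Z_i|^M for each coordinate i. Define the norm ‖x‖_{σ,M} = ( Σ_{i=1}^d |x_i|^M / (d σ_i^M) )^{1/M} on ℝ^d, and let X be a random vector whose law has density proportional to exp(−‖x‖_{σ,M} / c) with respect to Lebesgue measure. Then for every measurable randomized classifier g : ℝ^d → [0,1], (1/(2N)) Σ_{i=1}^N E[g(a_i + X)] + (1/(2N)) Σ_{j=1}^N E[1 − g(b_j + X)] ≤ 1/2 + η. -/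

import Mathlib

set_option maxHeartbeats 1000000
open MeasureTheory Finset
open scoped ENNReal NNReal

lemma wnorm_triangle (d : ℕ) (M : ℝ) (hM : 1 ≤ M) (σ : Fin d → ℝ) (hσ : ∀ t, 0 < σ t)
    (x y : Fin d → ℝ) :
    (∑ t, |x t + y t| ^ M / ((d : ℝ) * σ t ^ M)) ^ (1 / M) ≤
      (∑ t, |x t| ^ M / ((d : ℝ) * σ t ^ M)) ^ (1 / M) +
        (∑ t, |y t| ^ M / ((d : ℝ) * σ t ^ M)) ^ (1 / M) := by
  have hM0 : (0:ℝ) < M := by linarith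
  rcases Nat.eq_zero_or_pos d with hd | hd
  · subst hd
    simp [Real.zero_rpow (by positivity : 1 / M ≠ 0)]
    positivity
  · have hdR : (0:ℝ) < d := by exact_mod_cast hd
    set D : Fin d → ℝ := fun t => ((d : ℝ) ^ (1/M)) * σ t with hD
    have hDpos : ∀ t, 0 < D t := fun t => by
      have : (0:ℝ) < (d : ℝ) ^ (1/M) := Real.rpow_pos_of_pos hdR _
      exact mul_pos this (hσ t)
    have key : ∀ (t : Fin d) (z : ℝ), |z| ^ M / ((d : ℝ) * σ t ^ M) = |z / D t| ^ M := by
      intro t z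
      have hDM : D t ^ M = (d : ℝ) * σ t ^ M := by
        rw [hD]
        rw [Real.mul_rpow (by positivity) (hσ t).le, ← Real.rpow_mul hdR.le,
          one_div_mul_cancel hM0.ne', Real.rpow_one]
      rw [abs_div, abs_of_pos (hDpos t),
        Real.div_rpow (abs_nonneg _) (hDpos t).le, hDM]
    calc (∑ t, |x t + y t| ^ M / ((d : ℝ) * σ t ^ M)) ^ (1 / M)
        = (∑ t, |x t / D t + y t / D t| ^ M) ^ (1 / M) := by
          congr 1; refine Finset.sum_congr rfl fun t _ => ?_
          rw [key t (x t + y t), add_div]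
      _ ≤ (∑ t, |x t / D t| ^ M) ^ (1 / M) + (∑ t, |y t / D t| ^ M) ^ (1 / M) :=
          Real.Lp_add_le Finset.univ (fun t => x t / D t) (fun t => y t / D t) hM
      _ = (∑ t, |x t| ^ M / ((d : ℝ) * σ t ^ M)) ^ (1 / M) +
            (∑ t, |y t| ^ M / ((d : ℝ) * σ t ^ M)) ^ (1 / M) := by
          congr 1 <;> (congr 1; refine Finset.sum_congr rfl fun t _ => (key t _).symm)

theorem statement_12 (d N : ℕ) (hN : 0 < N) (M η : ℝ)
    (hM : 2 ≤ M) (hη0 : 0 < η) (hη1 : η ≤ 1 / 2)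
    (σ : Fin d → ℝ) (hσ : ∀ t, 0 < σ t)
    (a b : Fin N → (Fin d → ℝ))
    (hmom : ∀ t : Fin d,
      (1 / (2 * N : ℝ)) *
          ((∑ i, |a i t - ((1 / (2 * N : ℝ)) • (∑ i, a i + ∑ j, b j)) t| ^ M) +
            ∑ j, |b j t - ((1 / (2 * N : ℝ)) • (∑ i, a i + ∑ j, b j)) t| ^ M) ≤
        σ t ^ M)
    (μ : Measure (Fin d → ℝ)) [IsProbabilityMeasure μ]
    (K : ℝ) (hK : 0 < K)
    (hdens : μ = volume.withDensity
      (fun v => ENNReal.ofReal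
        (K * Real.exp (-((∑ t, |v t| ^ M / ((d : ℝ) * σ t ^ M)) ^ (1 / M)) /
          ((6.16 / η) ^ (1 + 2 / M))))))
    (g : (Fin d → ℝ) → ℝ) (hgmeas : Measurable g)
    (hg : ∀ v, g v ∈ Set.Icc (0 : ℝ) 1) :
    (1 / (2 * N : ℝ)) * (∑ i, ∫ v, g (a i + v) ∂μ) +
        (1 / (2 * N : ℝ)) * (∑ j, ∫ v, (1 - g (b j + v)) ∂μ) ≤
      1 / 2 + η := by
  have hM0 : (0:ℝ) < M := by linarith
  have hM1 : (1:ℝ) ≤ M := by linarith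
  have hNR : (0:ℝ) < 2 * N := by positivity
  have hNne : (2 * (N:ℝ)) ≠ 0 := hNR.ne'
  set m : Fin d → ℝ := (1 / (2 * N : ℝ)) • (∑ i, a i + ∑ j, b j) with hm
  set c : ℝ := (6.16 / η) ^ (1 + 2 / M) with hc
  -- basic facts on c
  have h616 : (1:ℝ) ≤ 6.16 / η := by
    rw [le_div_iff₀ hη0]; linarith
  have hc1 : 1 / η ≤ c := by
    have h1 : 6.16 / η ≤ c := by
      calc 6.16 / η = (6.16 / η) ^ (1:ℝ) := (Real.rpow_one _).symm
        _ ≤ c := Real.rpow_le_rpow_of_exponent_le h616 (by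
            have : (0:ℝ) < 2 / M := by positivity
            linarith)
    have h2 : 1 / η ≤ 6.16 / η := by gcongr; norm_num
    linarith
  have hc0 : (0:ℝ) < c := lt_of_lt_of_le (by positivity) hc1
  have hηc : 1 ≤ c * η := (div_le_iff₀ hη0).mp hc1
  -- the weighted norm
  set nrm : (Fin d → ℝ) → ℝ :=
    fun x => (∑ t, |x t| ^ M / ((d : ℝ) * σ t ^ M)) ^ (1 / M) with hnrm
  have hnrm_nonneg : ∀ x, 0 ≤ nrm x := by
    intro x
    apply Real.rpow_nonneg
    apply Finset.sum_nonneg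
    intro t _
    have h1 : (0:ℝ) ≤ |x t| ^ M := Real.rpow_nonneg (abs_nonneg _) _
    have h2 : (0:ℝ) ≤ (d : ℝ) * σ t ^ M := by
      have := Real.rpow_pos_of_pos (hσ t) M
      positivity
    exact div_nonneg h1 h2
  have hnrm_tri : ∀ x y, nrm (x + y) ≤ nrm x + nrm y := by
    intro x y
    have := wnorm_triangle d M hM1 σ hσ x y
    simpa [hnrm] using this
  -- the density
  set f : (Fin d → ℝ) → ℝ := fun v => K * Real.exp (-(nrm v) / c) with hf
  have hf_nonneg : ∀ v, 0 ≤ f v := fun v => by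
    have := Real.exp_pos (-(nrm v) / c); positivity
  have hnrm_cont : Continuous nrm := by
    apply Continuous.rpow_const
    · exact continuous_finset_sum _ fun t _ =>
        (((continuous_apply t).abs).rpow_const (fun x => Or.inr hM0.le)).div_const _
    · exact fun x => Or.inr (by positivity)
  have hf_meas : Measurable f :=
    (continuous_const.mul (Real.continuous_exp.comp (hnrm_cont.neg.div_const c))).measurable
  have hdens' : μ = volume.withDensity (fun v => ENNReal.ofReal (f v)) := hdens
  -- total mass
  have hvol : ∫⁻ v, ENNReal.ofReal (f v) = 1 := by
    have h := measure_univ (μ := μ)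
    rw [hdens', withDensity_apply _ MeasurableSet.univ, Measure.restrict_univ] at h
    exact h
  have hf_int : Integrable f := by
    refine ⟨hf_meas.aestronglyMeasurable, ?_⟩
    rw [hasFiniteIntegral_iff_ofReal (Filter.Eventually.of_forall hf_nonneg), hvol]
    exact ENNReal.one_lt_top
  have hf_int_tr : ∀ s : Fin d → ℝ, Integrable (fun w => f (w - s)) :=
    fun s => hf_int.comp_sub_right s
  have hf_total : ∫ v, f v = 1 := by
    rw [integral_eq_lintegral_of_nonneg_ae (Filter.Eventually.of_forall hf_nonneg)
      hf_meas.aestronglyMeasurable, hvol]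
    simp
  have htr_total : ∀ s : Fin d → ℝ, ∫ w, f (w - s) = 1 := by
    intro s
    rw [integral_sub_right_eq_self f s]
    exact hf_total
  -- integrability of g * translate
  have hgf_meas : ∀ s : Fin d → ℝ, Measurable (fun w => g w * f (w - s)) := by
    intro s
    exact hgmeas.mul (hf_meas.comp (measurable_id.sub measurable_const))
  have hint : ∀ s : Fin d → ℝ, Integrable (fun w => g w * f (w - s)) := by
    intro s
    refine (hf_int_tr s).mono' (hgf_meas s).aestronglyMeasurable ?_
    filter_upwards with w
    rw [Real.norm_eq_abs, abs_mul]
    have h1 := (hg w).1; have h2 := (hg w).2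
    have h3 := hf_nonneg (w - s)
    rw [abs_of_nonneg h1, abs_of_nonneg h3]
    nlinarith
  set J : (Fin d → ℝ) → ℝ := fun s => ∫ w, g w * f (w - s) with hJ
  -- change of variables
  have key_int : ∀ s : Fin d → ℝ, ∫ v, g (s + v) ∂μ = J s := by
    intro s
    rw [hdens']
    have h0 : (fun v => ENNReal.ofReal (f v)) = (fun v => ((f v).toNNReal : ℝ≥0∞)) := rfl
    rw [h0, integral_withDensity_eq_integral_smul
      (show Measurable fun v => (f v).toNNReal from measurable_real_toNNReal.comp hf_meas)
      (fun v => g (s + v))]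
    have heq : (fun v => (f v).toNNReal • g (s + v)) =
        (fun v => (fun w => g w * f (w - s)) (s + v)) := by
      funext v
      simp only [NNReal.smul_def, Real.coe_toNNReal _ (hf_nonneg v), add_sub_cancel_left,
        smul_eq_mul]
      ring
    rw [heq]
    exact integral_add_left_eq_self (fun w => g w * f (w - s)) s
  -- per-pair bound
  have hpair : ∀ i : Fin N, J (a i) - J (b i) ≤ nrm (a i - b i) / c := by
    intro i
    set Δ : ℝ := nrm (a i - b i) with hΔ
    have hΔ0 : 0 ≤ Δ := hnrm_nonneg _
    set e : ℝ := Real.exp (-(Δ / c)) with he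
    have he1 : e ≤ 1 := by
      rw [he, Real.exp_le_one_iff]
      have : 0 ≤ Δ / c := div_nonneg hΔ0 hc0.le
      linarith
    have hpt : ∀ w, g w * f (w - a i) - g w * f (w - b i) ≤ (1 - e) * f (w - a i) := by
      intro w
      have htri : nrm (w - b i) ≤ nrm (w - a i) + Δ := by
        have h := hnrm_tri (w - a i) (a i - b i)
        rw [sub_add_sub_cancel] at h
        exact h
      have h1 : e * f (w - a i) ≤ f (w - b i) := by
        have hexp : Real.exp (-(nrm (w - a i) + Δ) / c) ≤ Real.exp (-(nrm (w - b i)) / c) := by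
          apply Real.exp_le_exp.mpr
          apply (div_le_div_iff_of_pos_right hc0).mpr
          linarith
        calc e * f (w - a i) = K * Real.exp (-(nrm (w - a i) + Δ) / c) := by
              show Real.exp (-(Δ / c)) * (K * Real.exp (-(nrm (w - a i)) / c)) = _
              have harg : -(Δ / c) + -(nrm (w - a i)) / c = -(nrm (w - a i) + Δ) / c := by
                ring
              rw [← mul_assoc, mul_comm (Real.exp (-(Δ / c))) K, mul_assoc, ← Real.exp_add, harg]
          _ ≤ K * Real.exp (-(nrm (w - b i)) / c) :=
              mul_le_mul_of_nonneg_left hexp hK.le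
          _ = f (w - b i) := rfl
      have hga := (hg w).1; have hgb := (hg w).2
      have hfa := hf_nonneg (w - a i)
      nlinarith [mul_le_mul_of_nonneg_left h1 hga,
        mul_nonneg (mul_nonneg (sub_nonneg.mpr hgb) (sub_nonneg.mpr he1)) hfa]
    have hstep : J (a i) - J (b i) ≤ 1 - e := by
      rw [hJ]
      rw [← integral_sub (hint (a i)) (hint (b i))]
      calc (∫ w, (g w * f (w - a i) - g w * f (w - b i)))
          ≤ ∫ w, (1 - e) * f (w - a i) :=
            integral_mono ((hint (a i)).sub (hint (b i)))
              ((hf_int_tr (a i)).const_mul _) hpt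
        _ = (1 - e) * ∫ w, f (w - a i) := integral_const_mul _ _
        _ = 1 - e := by rw [htr_total]; ring
    have h2 : 1 - e ≤ Δ / c := by
      have := Real.add_one_le_exp (-(Δ / c))
      rw [← he] at this
      linarith
    linarith
  -- moment bound: sum of norms ≤ 2N
  have hzM : ∀ x : Fin d → ℝ, nrm x ^ M = ∑ t, |x t| ^ M / ((d : ℝ) * σ t ^ M) := by
    intro x
    have hpos : (0:ℝ) ≤ ∑ t, |x t| ^ M / ((d : ℝ) * σ t ^ M) := by
      apply Finset.sum_nonneg
      intro t _
      have h1 : (0:ℝ) ≤ |x t| ^ M := Real.rpow_nonneg (abs_nonneg _) _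
      have h2 : (0:ℝ) < σ t ^ M := Real.rpow_pos_of_pos (hσ t) M
      positivity
    simp only [hnrm]
    rw [one_div, Real.rpow_inv_rpow hpos hM0.ne']
  have havg : (∑ i, nrm (a i - m)) + (∑ j, nrm (m - b j)) ≤ 2 * N := by
    set w : Fin N ⊕ Fin N → ℝ := fun _ => 1 / (2 * N : ℝ) with hw
    set z : Fin N ⊕ Fin N → ℝ :=
      Sum.elim (fun i => nrm (a i - m)) (fun j => nrm (m - b j)) with hz
    have hz0 : ∀ k ∈ Finset.univ (α := Fin N ⊕ Fin N), (0:ℝ) ≤ z k := by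
      rintro (i | j) _ <;> exact hnrm_nonneg _
    have hw0 : ∀ k ∈ Finset.univ (α := Fin N ⊕ Fin N), (0:ℝ) ≤ w k := fun k _ => by positivity
    have hw1 : ∑ k : Fin N ⊕ Fin N, w k = 1 := by
      rw [Finset.sum_const, Finset.card_univ, Fintype.card_sum, Fintype.card_fin,
        nsmul_eq_mul]
      push_cast
      field_simp
      ring
    have hjensen := Real.arith_mean_le_rpow_mean Finset.univ w z hw0 hw1 hz0 hM1
    have hsum1 : ∑ k : Fin N ⊕ Fin N, w k * z k ^ M ≤ 1 := by
      have hexpand : ∑ k : Fin N ⊕ Fin N, w k * z k ^ M =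
          (1 / (2 * N : ℝ)) * ∑ t : Fin d,
            (((∑ i, |a i t - m t| ^ M) + ∑ j, |b j t - m t| ^ M) / ((d : ℝ) * σ t ^ M)) := by
        rw [Fintype.sum_sum_type]
        simp only [hw, hz, Sum.elim_inl, Sum.elim_inr, hzM, Pi.sub_apply]
        rw [← Finset.mul_sum, ← Finset.mul_sum, ← mul_add]
        congr 1
        have h1 : ∑ i : Fin N, ∑ t : Fin d, |a i t - m t| ^ M / ((d : ℝ) * σ t ^ M) =
            ∑ t : Fin d, ∑ i : Fin N, |a i t - m t| ^ M / ((d : ℝ) * σ t ^ M) :=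
          Finset.sum_comm
        have h2 : ∑ j : Fin N, ∑ t : Fin d, |m t - b j t| ^ M / ((d : ℝ) * σ t ^ M) =
            ∑ t : Fin d, ∑ j : Fin N, |m t - b j t| ^ M / ((d : ℝ) * σ t ^ M) :=
          Finset.sum_comm
        rw [h1, h2, ← Finset.sum_add_distrib]
        refine Finset.sum_congr rfl fun t _ => ?_
        rw [← Finset.sum_div, ← Finset.sum_div, ← add_div]
        congr 2
        refine Finset.sum_congr rfl fun j _ => ?_
        rw [abs_sub_comm]
      rw [hexpand]
      have hterm : ∀ t : Fin d,
          (((∑ i, |a i t - m t| ^ M) + ∑ j, |b j t - m t| ^ M) / ((d : ℝ) * σ t ^ M)) ≤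
          (2 * N : ℝ) / (d : ℝ) := by
        intro t
        have hd0 : (0:ℝ) < d := by
          have : 0 < d := Fin.pos t
          exact_mod_cast this
        have hσM : (0:ℝ) < σ t ^ M := Real.rpow_pos_of_pos (hσ t) M
        have hden : (0:ℝ) < (d : ℝ) * σ t ^ M := by positivity
        have hmom' : (∑ i, |a i t - m t| ^ M) + ∑ j, |b j t - m t| ^ M ≤
            (2 * N : ℝ) * σ t ^ M := by
          have h := hmom t
          have h2 := mul_le_mul_of_nonneg_left h hNR.le
          rw [← mul_assoc] at h2
          rw [mul_one_div, div_self hNne, one_mul] at h2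
          linarith
        calc (((∑ i, |a i t - m t| ^ M) + ∑ j, |b j t - m t| ^ M) / ((d : ℝ) * σ t ^ M))
            ≤ ((2 * N : ℝ) * σ t ^ M) / ((d : ℝ) * σ t ^ M) := by
              gcongr
          _ = (2 * N : ℝ) / (d : ℝ) := by
              rw [div_eq_div_iff hden.ne' hd0.ne']
              ring
      have hsum_t : ∑ t : Fin d,
          (((∑ i, |a i t - m t| ^ M) + ∑ j, |b j t - m t| ^ M) / ((d : ℝ) * σ t ^ M)) ≤
          2 * N := by
        calc ∑ t : Fin d,
            (((∑ i, |a i t - m t| ^ M) + ∑ j, |b j t - m t| ^ M) / ((d : ℝ) * σ t ^ M))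
            ≤ ∑ _t : Fin d, (2 * N : ℝ) / (d : ℝ) := Finset.sum_le_sum fun t _ => hterm t
          _ ≤ 2 * N := by
              rcases Nat.eq_zero_or_pos d with h | h
              · subst h; simp
              · have hdne : (d:ℝ) ≠ 0 := Nat.cast_ne_zero.mpr h.ne'
                rw [Finset.sum_const, Finset.card_univ, Fintype.card_fin, nsmul_eq_mul,
                  mul_div_assoc']
                rw [mul_comm ((d:ℝ)) _, mul_div_assoc, div_self hdne, mul_one]
      calc (1 / (2 * N : ℝ)) * ∑ t : Fin d,
            (((∑ i, |a i t - m t| ^ M) + ∑ j, |b j t - m t| ^ M) / ((d : ℝ) * σ t ^ M))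
          ≤ (1 / (2 * N : ℝ)) * (2 * N) :=
            mul_le_mul_of_nonneg_left hsum_t (by positivity)
        _ = 1 := by field_simp
    have hS : (1 / (2 * (N:ℝ))) *
        ((∑ i, nrm (a i - m)) + ∑ j, nrm (m - b j)) ≤ 1 := by
      have hwz : ∑ k : Fin N ⊕ Fin N, w k * z k =
          (1 / (2 * N : ℝ)) * ((∑ i, nrm (a i - m)) + ∑ j, nrm (m - b j)) := by
        rw [Fintype.sum_sum_type]
        simp only [hw, hz, Sum.elim_inl, Sum.elim_inr]
        rw [← Finset.mul_sum, ← Finset.mul_sum, ← mul_add]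
      have hub : (∑ k : Fin N ⊕ Fin N, w k * z k ^ M) ^ (1 / M) ≤ 1 := by
        apply Real.rpow_le_one ?_ hsum1 (by positivity)
        apply Finset.sum_nonneg
        rintro (i | j) _ <;>
          exact mul_nonneg (by positivity) (Real.rpow_nonneg (hnrm_nonneg _) _)
      rw [← hwz]
      exact hjensen.trans hub
    have hS' : ((∑ i, nrm (a i - m)) + ∑ j, nrm (m - b j)) / (2 * N : ℝ) ≤ 1 := by
      rwa [one_div, inv_mul_eq_div] at hS
    exact (div_le_one hNR).mp hS'
  -- sum of pair distances
  have hΔsum : ∑ i, nrm (a i - b i) ≤ 2 * N := by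
    calc ∑ i, nrm (a i - b i) ≤ ∑ i, (nrm (a i - m) + nrm (m - b i)) := by
          refine Finset.sum_le_sum fun i _ => ?_
          have h := hnrm_tri (a i - m) (m - b i)
          rwa [sub_add_sub_cancel] at h
      _ = (∑ i, nrm (a i - m)) + ∑ i, nrm (m - b i) := Finset.sum_add_distrib
      _ ≤ 2 * N := havg
  -- integrability of g shifted w.r.t. μ
  have hIg : ∀ s : Fin d → ℝ, Integrable (fun v => g (s + v)) μ := by
    intro s
    refine (integrable_const (1:ℝ)).mono'
      ((hgmeas.comp (measurable_id.const_add s)).aestronglyMeasurable) ?_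
    filter_upwards with v
    rw [Real.norm_eq_abs, abs_of_nonneg (hg _).1]
    exact (hg _).2
  have hsplitb : ∀ j : Fin N, ∫ v, (1 - g (b j + v)) ∂μ = 1 - ∫ v, g (b j + v) ∂μ := by
    intro j
    rw [integral_sub (integrable_const 1) (hIg (b j)), integral_const]
    simp
  -- final computation
  have hdiff : (∑ i, J (a i)) - (∑ i, J (b i)) ≤ 2 * N * η := by
    calc (∑ i, J (a i)) - (∑ i, J (b i)) = ∑ i, (J (a i) - J (b i)) :=
          (Finset.sum_sub_distrib _ _).symm
      _ ≤ ∑ i, nrm (a i - b i) / c := Finset.sum_le_sum fun i _ => hpair i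
      _ = (∑ i, nrm (a i - b i)) / c := (Finset.sum_div _ _ _).symm
      _ ≤ (2 * N) / c := by
          gcongr
      _ ≤ 2 * N * η := by
          rw [div_le_iff₀ hc0]
          have hN0 : (0:ℝ) ≤ (N:ℝ) := Nat.cast_nonneg N
          nlinarith
  calc (1 / (2 * N : ℝ)) * (∑ i, ∫ v, g (a i + v) ∂μ) +
        (1 / (2 * N : ℝ)) * (∑ j, ∫ v, (1 - g (b j + v)) ∂μ)
      = (1 / (2 * N : ℝ)) * (∑ i, J (a i)) +
          (1 / (2 * N : ℝ)) * (∑ j, (1 - J (b j))) := by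
        simp only [hsplitb, key_int]
    _ = 1 / 2 + (1 / (2 * N : ℝ)) * ((∑ i, J (a i)) - (∑ i, J (b i))) := by
        rw [Finset.sum_sub_distrib, Finset.sum_const, Finset.card_univ, Fintype.card_fin,
          nsmul_eq_mul, mul_one]
        field_simp
        ring
    _ ≤ 1 / 2 + (1 / (2 * N : ℝ)) * (2 * N * η) := by
        have h0 : (0:ℝ) ≤ 1 / (2 * N : ℝ) := by positivity
        have := mul_le_mul_of_nonneg_left hdiff h0
        linarith
    _ = 1 / 2 + η := by
        field_simp
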